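/- arXiv:math/0611244 — 2 statements merged into one kernel-verified Lean document; each statement's English description precedes it below -/
import Mathlib

section
/- Let P = ℂ[[x₁,…,xₙ]] with maximal ideal m and let 0 ≠ f ∈ m. For every k ∈ ℕ there exists m₀ ∈ ℕ such that: for every ℂ-linear derivation δ of P with δ(f) ∈ (f) + m^{m₀+1}, there exists δ' ∈ Der_f with δ(xⱼ) − δ'(xⱼ) ∈ m^{k+1} for all j (i.e. δ and δ' agree modulo m^{k+1}·Der(P)). -/
noncomputable section
set_option synthInstance.maxHeartbeats 1000000
set_option maxHeartbeats 1000000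

namespace HBAux
open PowerSeries

open PowerSeries
variable {R : Type*} [CommRing R]

/-- Submodule of power series divisible by `X^i`. -/
def ordGE (R : Type*) [CommRing R] (i : ℕ) : Submodule R R⟦X⟧ where
  carrier := {f | X ^ i ∣ f}
  add_mem' hf hg := dvd_add hf hg
  zero_mem' := dvd_zero _
  smul_mem' c f hf := by
    rw [Set.mem_setOf_eq, smul_eq_C_mul]
    exact hf.mul_left _

/-- Ideal of `i`-th coefficients of elements of `I` of order at least `i`. -/
def lcoeffI (I : Ideal R⟦X⟧) (i : ℕ) : Ideal R :=
  Submodule.map (PowerSeries.coeff i) (I.restrictScalars R ⊓ ordGE R i)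

lemma mem_lcoeffI {I : Ideal R⟦X⟧} {i : ℕ} {a : R} :
    a ∈ lcoeffI I i ↔ ∃ f, f ∈ I ∧ X ^ i ∣ f ∧ coeff i f = a := by
  constructor
  · rintro ⟨f, ⟨hfI, hfd⟩, rfl⟩
    exact ⟨f, hfI, hfd, rfl⟩
  · rintro ⟨f, hfI, hfd, rfl⟩
    exact ⟨f, ⟨hfI, hfd⟩, rfl⟩

lemma lcoeffI_mono (I : Ideal R⟦X⟧) : Monotone (lcoeffI I) := by
  apply monotone_nat_of_le_succ
  intro i a ha
  obtain ⟨f, hfI, hfd, rfl⟩ := mem_lcoeffI.mp ha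
  refine mem_lcoeffI.mpr ⟨X * f, I.mul_mem_left _ hfI, ?_, coeff_succ_X_mul i f⟩
  rw [pow_succ, mul_comm (X ^ i) X]
  exact mul_dvd_mul_left X hfd

/-- The key approximation construction: if a finite family `g` of elements of `I`
allows one to kill leading coefficients at every degree `≥ N`, then every element
of `I` of order `≥ N` lies in the ideal generated by `g`. -/
lemma tail_span (I : Ideal R⟦X⟧) (N mN : ℕ) (g : Fin mN → R⟦X⟧)
    (hgI : ∀ t, g t ∈ I)
    (hstep : ∀ i, N ≤ i → ∀ r ∈ I, X ^ i ∣ r →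
      ∃ c : Fin mN → R, X ^ (i + 1) ∣ (r - ∑ t, c t • (X ^ (i - N) * g t)))
    (h : R⟦X⟧) (hhI : h ∈ I) (hhd : X ^ N ∣ h) :
    h ∈ Ideal.span (Set.range g) := by
  have key : ∀ d (r : R⟦X⟧), r ∈ I ∧ X ^ (N + d) ∣ r →
      ∃ c : Fin mN → R, (r - ∑ t, c t • (X ^ d * g t)) ∈ I ∧
        X ^ (N + (d + 1)) ∣ (r - ∑ t, c t • (X ^ d * g t)) := by
    rintro d r ⟨hrI, hrd⟩
    obtain ⟨c, hc⟩ := hstep (N + d) (Nat.le_add_right _ _) r hrI hrd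
    rw [Nat.add_sub_cancel_left] at hc
    refine ⟨c, sub_mem hrI (Ideal.sum_mem _ fun t _ => ?_), ?_⟩
    · rw [smul_eq_C_mul]
      exact Ideal.mul_mem_left _ _ (Ideal.mul_mem_left _ _ (hgI t))
    · rw [show N + (d + 1) = (N + d) + 1 by ring]
      exact hc
  let T : ℕ → Type _ := fun d => {r : R⟦X⟧ // r ∈ I ∧ X ^ (N + d) ∣ r}
  let step : ∀ d, T d → T (d + 1) := fun d p =>
    ⟨p.1 - ∑ t, (Classical.choose (key d p.1 p.2)) t • (X ^ d * g t),
      Classical.choose_spec (key d p.1 p.2)⟩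
  let G : ∀ d, T d := fun d => Nat.rec (motive := T) ⟨h, hhI, hhd⟩ step d
  let c : ℕ → Fin mN → R := fun d => Classical.choose (key d (G d).1 (G d).2)
  have hGsucc : ∀ d, (G (d + 1)).1 = (G d).1 - ∑ t, c d t • (X ^ d * g t) := fun d => rfl
  have hGeq : ∀ d, (G d).1 = h - ∑ t, ∑ e ∈ Finset.range d, c e t • (X ^ e * g t) := by
    intro d
    induction d with
    | zero => simp [G]
    | succ d ih =>
      rw [hGsucc d, ih, Finset.sum_congr rfl fun t (_ : t ∈ Finset.univ) =>
        Finset.sum_range_succ (fun e => c e t • (X ^ e * g t)) d, Finset.sum_add_distrib]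
      abel
  have hmain : h = ∑ t, (PowerSeries.mk fun d => c d t) * g t := by
    ext D
    have h1 : coeff D ((G (D + 1)).1) = 0 :=
      X_pow_dvd_iff.mp (G (D + 1)).2.2 D (by omega)
    rw [hGeq (D + 1), map_sub] at h1
    have h2 : coeff D h = coeff D (∑ t, ∑ e ∈ Finset.range (D + 1), c e t • (X ^ e * g t)) :=
      sub_eq_zero.mp h1
    rw [h2, map_sum, map_sum]
    refine Finset.sum_congr rfl fun t _ => ?_
    rw [map_sum, coeff_mul, Finset.Nat.sum_antidiagonal_eq_sum_range_succ_mk]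
    refine Finset.sum_congr rfl fun e he => ?_
    rw [LinearMap.map_smul, smul_eq_mul, PowerSeries.coeff_mk]
    congr 1
    have hED : e ≤ D := Nat.lt_succ_iff.mp (Finset.mem_range.mp he)
    conv_lhs => rw [show D = (D - e) + e from (Nat.sub_add_cancel hED).symm, coeff_X_pow_mul]
  rw [hmain]
  exact Ideal.sum_mem _ fun t _ =>
    Ideal.mul_mem_left _ _ (Ideal.subset_span (Set.mem_range_self t))

theorem powerSeries_isNoetherianRing [IsNoetherianRing R] : IsNoetherianRing R⟦X⟧ := by
  rw [isNoetherianRing_iff_ideal_fg]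
  intro I
  obtain ⟨Nb, hNb0⟩ := monotone_stabilizes_iff_noetherian.mpr inferInstance
    ⟨lcoeffI I, lcoeffI_mono I⟩
  have hNb : ∀ i, Nb ≤ i → lcoeffI I Nb = lcoeffI I i := hNb0
  have hgen : ∀ i : ℕ, ∃ (m : ℕ) (g : Fin m → R⟦X⟧),
      (∀ t, g t ∈ I ∧ X ^ i ∣ g t) ∧
      ∀ a ∈ lcoeffI I i, ∃ c : Fin m → R, ∑ t, c t * coeff i (g t) = a := by
    intro i
    obtain ⟨m, s, hs⟩ := Submodule.fg_iff_exists_fin_generating_family.mp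
      (IsNoetherian.noetherian (lcoeffI I i))
    have hmem : ∀ t, ∃ f, f ∈ I ∧ X ^ i ∣ f ∧ coeff i f = s t := fun t =>
      mem_lcoeffI.mp (hs ▸ Submodule.subset_span (Set.mem_range_self t))
    choose g hgI hgD hgc using hmem
    refine ⟨m, g, fun t => ⟨hgI t, hgD t⟩, fun a ha => ?_⟩
    rw [← hs] at ha
    obtain ⟨c, hc⟩ := (Submodule.mem_span_range_iff_exists_fun R).mp ha
    refine ⟨c, ?_⟩
    simp only [hgc]
    simpa [smul_eq_mul] using hc
  choose m g hgprop hgspan using hgen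
  have stepA : ∀ i (r : R⟦X⟧), r ∈ I → X ^ i ∣ r →
      ∃ c : Fin (m i) → R, (r - ∑ t, c t • g i t) ∈ I ∧
        X ^ (i + 1) ∣ (r - ∑ t, c t • g i t) := by
    intro i r hrI hrd
    obtain ⟨c, hc⟩ := hgspan i (coeff i r) (mem_lcoeffI.mpr ⟨r, hrI, hrd, rfl⟩)
    refine ⟨c, sub_mem hrI (Ideal.sum_mem _ fun t _ => by
      rw [smul_eq_C_mul]; exact Ideal.mul_mem_left _ _ (hgprop i t).1), ?_⟩
    rw [X_pow_dvd_iff]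
    intro j hj
    rw [map_sub, map_sum]
    rcases lt_or_eq_of_le (Nat.lt_succ_iff.mp hj) with hj' | rfl
    · have hr0 : coeff j r = 0 := X_pow_dvd_iff.mp hrd j hj'
      have hg0 : ∀ t, coeff j (c t • g i t) = 0 := fun t => by
        rw [LinearMap.map_smul, smul_eq_mul, X_pow_dvd_iff.mp (hgprop i t).2 j hj', mul_zero]
      simp [hr0, hg0]
    · have hg1 : ∀ t, coeff j (c t • g j t) = c t * coeff j (g j t) := fun t => by
        rw [LinearMap.map_smul, smul_eq_mul]
      rw [Finset.sum_congr rfl fun t _ => hg1 t, hc, sub_self]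
  have stepB : ∀ i, Nb ≤ i → ∀ r ∈ I, X ^ i ∣ r →
      ∃ c : Fin (m Nb) → R, X ^ (i + 1) ∣ (r - ∑ t, c t • (X ^ (i - Nb) * g Nb t)) := by
    intro i hi r hrI hrd
    have hJ : coeff i r ∈ lcoeffI I Nb := by
      rw [hNb i hi]
      exact mem_lcoeffI.mpr ⟨r, hrI, hrd, rfl⟩
    obtain ⟨c, hc⟩ := hgspan Nb _ hJ
    have hdvd : ∀ t, X ^ i ∣ X ^ (i - Nb) * g Nb t := fun t => by
      have h' : X ^ (i - Nb) * X ^ Nb ∣ X ^ (i - Nb) * g Nb t :=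
        mul_dvd_mul_left _ (hgprop Nb t).2
      rwa [← pow_add, Nat.sub_add_cancel hi] at h'
    refine ⟨c, ?_⟩
    rw [X_pow_dvd_iff]
    intro j hj
    rw [map_sub, map_sum]
    rcases lt_or_eq_of_le (Nat.lt_succ_iff.mp hj) with hj' | rfl
    · have hr0 : coeff j r = 0 := X_pow_dvd_iff.mp hrd j hj'
      have hg0 : ∀ t, coeff j (c t • (X ^ (i - Nb) * g Nb t)) = 0 := fun t => by
        rw [LinearMap.map_smul, smul_eq_mul, X_pow_dvd_iff.mp (hdvd t) j hj', mul_zero]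
      simp [hr0, hg0]
    · have hco : ∀ t, coeff j (c t • (X ^ (j - Nb) * g Nb t)) = c t * coeff Nb (g Nb t) := by
        intro t
        rw [LinearMap.map_smul, smul_eq_mul]
        congr 1
        rw [show j = Nb + (j - Nb) from (Nat.add_sub_cancel' hi).symm]
        rw [Nat.add_sub_cancel_left, coeff_X_pow_mul]
      rw [Finset.sum_congr rfl fun t _ => hco t, hc, sub_self]
  set SGen : Set R⟦X⟧ := ⋃ i ∈ Finset.range (Nb + 1), Set.range (g i) with hSGen
  have hfin : SGen.Finite :=
    Set.Finite.biUnion (Finset.finite_toSet _) fun i _ => Set.finite_range _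
  have hsub : SGen ⊆ I := by
    intro x hx
    simp only [hSGen, Set.mem_iUnion, Set.mem_range] at hx
    obtain ⟨i, _, t, rfl⟩ := hx
    exact (hgprop i t).1
  have hmemS : ∀ i, i ≤ Nb → ∀ t, g i t ∈ SGen := by
    intro i hi t
    simp only [hSGen, Set.mem_iUnion, Set.mem_range]
    exact ⟨i, Finset.mem_range.mpr (by omega), t, rfl⟩
  have down : ∀ d (r : R⟦X⟧), r ∈ I → X ^ (Nb - d) ∣ r → r ∈ Ideal.span SGen := by
    intro d
    induction d with
    | zero =>
      intro r hrI hrd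
      refine Ideal.span_mono ?_ (tail_span I Nb (m Nb) (g Nb) (fun t => (hgprop Nb t).1)
        stepB r hrI hrd)
      intro x hx
      obtain ⟨t, rfl⟩ := hx
      exact hmemS Nb le_rfl t
    | succ d ih =>
      intro r hrI hrd
      by_cases hdN : Nb ≤ d
      · refine ih r hrI ?_
        rw [Nat.sub_eq_zero_of_le hdN]
        rwa [Nat.sub_eq_zero_of_le (by omega : Nb ≤ d + 1)] at hrd
      · push_neg at hdN
        obtain ⟨c, hcI, hcd⟩ := stepA (Nb - (d + 1)) r hrI hrd
        have hs1 : Nb - (d + 1) + 1 = Nb - d := by omega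
        have hmem2 : r - ∑ t, c t • g (Nb - (d + 1)) t ∈ Ideal.span SGen :=
          ih _ hcI (by rwa [hs1] at hcd)
        have hr : r = (r - ∑ t, c t • g (Nb - (d + 1)) t) + ∑ t, c t • g (Nb - (d + 1)) t := by
          ring
        rw [hr]
        refine add_mem hmem2 (Ideal.sum_mem _ fun t _ => ?_)
        rw [smul_eq_C_mul]
        exact Ideal.mul_mem_left _ _ (Ideal.subset_span (hmemS _ (by omega) t))
  have hIS : I = Ideal.span SGen := by
    refine le_antisymm (fun r hr => ?_) (Ideal.span_le.mpr hsub)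
    exact down Nb r hr (by rw [Nat.sub_self, pow_zero]; exact one_dvd _)
  rw [hIS]
  exact Submodule.fg_def.mpr ⟨SGen, hfin, rfl⟩


variable {R : Type*} [CommRing R] {n : ℕ}

lemma cons_add (a b : ℕ) (s t : Fin n →₀ ℕ) :
    Finsupp.cons (a + b) (s + t) = Finsupp.cons a s + Finsupp.cons b t := by
  ext i
  refine Fin.cases ?_ (fun i => ?_) i <;>
    simp [Finsupp.cons_zero, Finsupp.cons_succ]

lemma tail_add (u v : Fin (n + 1) →₀ ℕ) :
    Finsupp.tail (u + v) = Finsupp.tail u + Finsupp.tail v := by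
  ext i
  simp [Finsupp.tail_apply]

/-- Forward map. -/
def psTo (R : Type*) [CommRing R] (n : ℕ) (F : MvPowerSeries (Fin (n + 1)) R) :
    PowerSeries (MvPowerSeries (Fin n) R) :=
  PowerSeries.mk fun k =>
    ((fun d => MvPowerSeries.coeff (Finsupp.cons k d) F) : MvPowerSeries (Fin n) R)

lemma coeff_psTo (F : MvPowerSeries (Fin (n + 1)) R) (k : ℕ) (d : Fin n →₀ ℕ) :
    MvPowerSeries.coeff d (PowerSeries.coeff k (psTo R n F)) =
      MvPowerSeries.coeff (Finsupp.cons k d) F := by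
  exact (congrArg (MvPowerSeries.coeff d) (PowerSeries.coeff_mk (R := MvPowerSeries (Fin n) R) k _)).trans rfl

/-- Backward map. -/
def psFrom (R : Type*) [CommRing R] (n : ℕ) (G : PowerSeries (MvPowerSeries (Fin n) R)) :
    MvPowerSeries (Fin (n + 1)) R :=
  ((fun e => MvPowerSeries.coeff (Finsupp.tail e)
    (PowerSeries.coeff (e 0) G)) : MvPowerSeries (Fin (n + 1)) R)

lemma coeff_psFrom (G : PowerSeries (MvPowerSeries (Fin n) R)) (e : Fin (n + 1) →₀ ℕ) :
    MvPowerSeries.coeff e (psFrom R n G) =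
      MvPowerSeries.coeff (Finsupp.tail e) (PowerSeries.coeff (e 0) G) := rfl

/-- `R[[x₀,…,xₙ]] ≅ (R[[x₁,…,xₙ]])[[x₀]]`. -/
def psEquiv (R : Type*) [CommRing R] (n : ℕ) :
    MvPowerSeries (Fin (n + 1)) R ≃+* PowerSeries (MvPowerSeries (Fin n) R) where
  toFun := psTo R n
  invFun := psFrom R n
  left_inv F := by
    apply MvPowerSeries.ext
    intro e
    rw [coeff_psFrom, coeff_psTo, Finsupp.cons_tail]
  right_inv G := by
    apply PowerSeries.ext
    intro k
    apply MvPowerSeries.ext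
    intro d
    rw [coeff_psTo, coeff_psFrom, Finsupp.tail_cons, Finsupp.cons_zero]
  map_add' F G := by
    apply PowerSeries.ext
    intro k
    rw [map_add]
    apply MvPowerSeries.ext
    intro d
    rw [map_add, coeff_psTo, coeff_psTo, coeff_psTo, map_add]
  map_mul' F G := by
    apply PowerSeries.ext
    intro k
    apply MvPowerSeries.ext
    intro d
    rw [coeff_psTo, PowerSeries.coeff_mul, map_sum, MvPowerSeries.coeff_mul]
    have hrhs : ∀ p : ℕ × ℕ, (MvPowerSeries.coeff d)
        (PowerSeries.coeff p.1 (psTo R n F) * PowerSeries.coeff p.2 (psTo R n G)) =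
        ∑ q ∈ Finset.HasAntidiagonal.antidiagonal d,
          MvPowerSeries.coeff (Finsupp.cons p.1 q.1) F *
          MvPowerSeries.coeff (Finsupp.cons p.2 q.2) G := by
      intro p
      rw [MvPowerSeries.coeff_mul]
      exact Finset.sum_congr rfl fun q _ => by rw [coeff_psTo, coeff_psTo]
    rw [Finset.sum_congr rfl fun p _ => hrhs p, ← Finset.sum_product']
    refine Finset.sum_nbij' (fun r => ((r.1 0, r.2 0), (Finsupp.tail r.1, Finsupp.tail r.2)))
      (fun x => (Finsupp.cons x.1.1 x.2.1, Finsupp.cons x.1.2 x.2.2)) ?_ ?_ ?_ ?_ ?_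
    · intro a ha
      rw [Finset.HasAntidiagonal.mem_antidiagonal] at ha
      rw [Finset.mem_product, Finset.HasAntidiagonal.mem_antidiagonal, Finset.HasAntidiagonal.mem_antidiagonal]
      constructor
      · have h0 := congrArg (fun u => u 0) ha
        simpa [Finsupp.cons_zero] using h0
      · rw [← tail_add, ha, Finsupp.tail_cons]
    · intro x hx
      rw [Finset.mem_product, Finset.HasAntidiagonal.mem_antidiagonal, Finset.HasAntidiagonal.mem_antidiagonal] at hx
      rw [Finset.HasAntidiagonal.mem_antidiagonal, ← cons_add, hx.1, hx.2]
    · intro a ha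
      simp [Finsupp.cons_tail]
    · intro x hx
      simp [Finsupp.tail_cons, Finsupp.cons_zero]
    · intro a ha
      simp [Finsupp.cons_tail]

/-- `R[[∅]] ≅ R`. -/
def psEquivZero (R : Type*) [CommRing R] : MvPowerSeries (Fin 0) R ≃+* R where
  toFun := MvPowerSeries.constantCoeff (σ := Fin 0) (R := R)
  invFun := MvPowerSeries.C (σ := Fin 0) (R := R)
  left_inv f := by
    apply MvPowerSeries.ext
    intro d
    have hd : d = 0 := Subsingleton.elim d 0
    subst hd
    rw [MvPowerSeries.coeff_zero_C, MvPowerSeries.coeff_zero_eq_constantCoeff]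
  right_inv a := by simp
  map_add' := map_add _
  map_mul' := map_mul _


theorem mvPowerSeries_isNoetherianRing (R : Type*) [CommRing R] [IsNoetherianRing R] :
    ∀ n : ℕ, IsNoetherianRing (MvPowerSeries (Fin n) R) := by
  intro n
  induction n with
  | zero => exact isNoetherianRing_of_ringEquiv R (psEquivZero R).symm
  | succ n ih =>
    haveI := ih
    haveI : IsNoetherianRing (PowerSeries (MvPowerSeries (Fin n) R)) :=
      powerSeries_isNoetherianRing
    exact isNoetherianRing_of_ringEquiv _ (psEquiv R n).symm

end HBAux

instance (n : ℕ) : IsNoetherianRing (MvPowerSeries (Fin n) ℂ) :=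
  HBAux.mvPowerSeries_isNoetherianRing ℂ n

/-- Evaluation of a derivation at a fixed power series, as a linear map over the power
series ring. -/
def evalDer {n : ℕ} (g : MvPowerSeries (Fin n) ℂ) :
    Derivation ℂ (MvPowerSeries (Fin n) ℂ) (MvPowerSeries (Fin n) ℂ)
      →ₗ[MvPowerSeries (Fin n) ℂ] MvPowerSeries (Fin n) ℂ where
  toFun δ := δ g
  map_add' _ _ := rfl
  map_smul' _ _ := rfl

/-- The maximal ideal `m = (x₁,…,xₙ)` of `ℂ[[x₁,…,xₙ]]`. -/
def mIdeal (n : ℕ) : Ideal (MvPowerSeries (Fin n) ℂ) :=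
  Ideal.span (Set.range (MvPowerSeries.X : Fin n → MvPowerSeries (Fin n) ℂ))

/-- Let `P = ℂ[[x₁,…,xₙ]]` with maximal ideal `m` and `0 ≠ f ∈ m`. For every `k ∈ ℕ`
there exists `m₀ ∈ ℕ` such that: for every ℂ-linear derivation `δ` of `P` with
`δ(f) ∈ (f) + m^{m₀+1}` there exists `δ' ∈ Der_f` with `δ(xⱼ) − δ'(xⱼ) ∈ m^{k+1}`
for all `j`. -/
theorem derLog_approximation {n : ℕ} (hn : 0 < n)
    (f : MvPowerSeries (Fin n) ℂ) (hf0 : f ≠ 0) (hfm : f ∈ mIdeal n) (k : ℕ) :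
    ∃ m₀ : ℕ, ∀ δ : Derivation ℂ (MvPowerSeries (Fin n) ℂ) (MvPowerSeries (Fin n) ℂ),
      δ f ∈ Ideal.span {f} ⊔ mIdeal n ^ (m₀ + 1) →
      ∃ δ' : Derivation ℂ (MvPowerSeries (Fin n) ℂ) (MvPowerSeries (Fin n) ℂ),
        δ' f ∈ Ideal.span {f} ∧
        ∀ j, δ (MvPowerSeries.X j) - δ' (MvPowerSeries.X j) ∈ mIdeal n ^ (k + 1) := by
  set I : Ideal (MvPowerSeries (Fin n) ℂ) := mIdeal n with hIdef
  set Φ := evalDer (n := n) f with hΦ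
  set N : Submodule (MvPowerSeries (Fin n) ℂ) (MvPowerSeries (Fin n) ℂ) :=
    LinearMap.range Φ ⊔ (Ideal.span {f} : Ideal (MvPowerSeries (Fin n) ℂ)) with hN
  obtain ⟨k₀, hk₀⟩ := Ideal.exists_pow_inf_eq_pow_smul I N
  refine ⟨k₀ + k, fun δ hδ => ?_⟩
  obtain ⟨y, hy, z, hz, hyz⟩ := Submodule.mem_sup.1 hδ
  have hzN : z ∈ N := by
    have h1 : δ f ∈ N := Submodule.mem_sup_left ⟨δ, rfl⟩
    have h2 : y ∈ N := Submodule.mem_sup_right hy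
    have h3 : z = δ f - y := by rw [← hyz]; ring
    rw [h3]; exact sub_mem h1 h2
  have hz' : z ∈ I ^ (k₀ + k + 1) • ⊤ ⊓ N := by
    refine ⟨?_, hzN⟩
    rw [smul_eq_mul, Ideal.mul_top]
    exact hz
  rw [hk₀ (k₀ + k + 1) (by omega)] at hz'
  have hsub : I ^ (k₀ + k + 1 - k₀) • (I ^ k₀ • ⊤ ⊓ N) ≤ I ^ (k + 1) • N := by
    have h4 : k₀ + k + 1 - k₀ = k + 1 := by omega
    rw [h4]
    exact Submodule.smul_mono le_rfl inf_le_right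
  have hz2 : z ∈ I ^ (k + 1) • N := hsub hz'
  rw [hN, Submodule.smul_sup] at hz2
  obtain ⟨z₁, hz₁, z₂, hz₂, hz12⟩ := Submodule.mem_sup.1 hz2
  have hz₁' : z₁ ∈ Submodule.map Φ
      (I ^ (k + 1) • (⊤ : Submodule _ (Derivation ℂ (MvPowerSeries (Fin n) ℂ)
        (MvPowerSeries (Fin n) ℂ)))) := by
    rwa [Submodule.map_smul'', Submodule.map_top]
  obtain ⟨ε, hε, hεz⟩ := hz₁'
  refine ⟨δ - ε, ?_, ?_⟩
  · have h5 : (δ - ε) f = δ f - Φ ε := rfl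
    rw [h5, hεz, ← hyz, ← hz12]
    have hz₂' : z₂ ∈ Ideal.span {f} := Submodule.smul_le_right hz₂
    have h6 : y + (z₁ + z₂) - z₁ = y + z₂ := by ring
    rw [h6]
    exact add_mem hy hz₂'
  · intro j
    have h7 : δ (MvPowerSeries.X j) - (δ - ε) (MvPowerSeries.X j)
        = ε (MvPowerSeries.X j) := by simp
    rw [h7]
    have h8 : ε (MvPowerSeries.X j) ∈ Submodule.map (evalDer (MvPowerSeries.X j))
        (I ^ (k + 1) • ⊤) := ⟨ε, hε, rfl⟩
    rw [Submodule.map_smul''] at h8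
    have h9 := Submodule.smul_mono (le_refl (I ^ (k + 1)))
      (le_top (a := Submodule.map (evalDer (n := n) (MvPowerSeries.X j)) ⊤)) h8
    rwa [smul_eq_mul, Ideal.mul_top] at h9
end
end

section
/- Let P = ℂ[[x₁,…,xₙ]] with maximal ideal m and let φ be a ℂ-algebra automorphism of P with φ(m) = m. Suppose φ is semisimple in the sense that there exist u₁,…,uₙ ∈ m generating m (a formal coordinate system) and scalars c₁,…,cₙ ∈ ℂ with φ(uᵢ) = cᵢ·uᵢ for all i. If the degree-0 part of φ is the identity, i.e. φ(xⱼ) − xⱼ ∈ m² for all j, then φ is the identity automorphism of P. -/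
noncomputable section
set_option synthInstance.maxHeartbeats 1000000
set_option maxHeartbeats 1000000

open MvPowerSeries

lemma Finsupp.degree_add'' {σ : Type*} (a b : σ →₀ ℕ) :
    (a + b).degree = a.degree + b.degree := by
  simp [Finsupp.degree_eq_weight_one, map_add]

/-- The ideal of power series all of whose coefficients of degree `< k` vanish. -/
def lowIdeal (n k : ℕ) : Ideal (MvPowerSeries (Fin n) ℂ) where
  carrier := {f | ∀ d : Fin n →₀ ℕ, d.degree < k → MvPowerSeries.coeff d f = 0}
  add_mem' := fun hf hg d hd => by simp [map_add, hf d hd, hg d hd]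
  zero_mem' := fun d _ => by simp
  smul_mem' := by
    intro c f hf d hd
    classical
    rw [smul_eq_mul, MvPowerSeries.coeff_mul]
    apply Finset.sum_eq_zero
    rintro ⟨p, q⟩ hpq
    rw [Finset.HasAntidiagonal.mem_antidiagonal] at hpq
    have hq : q.degree < k := by
      have := Finsupp.degree_add'' p q
      rw [hpq] at this
      omega
    rw [hf q hq, mul_zero]

lemma mem_lowIdeal {n k : ℕ} {f : MvPowerSeries (Fin n) ℂ} :
    f ∈ lowIdeal n k ↔ ∀ d : Fin n →₀ ℕ, d.degree < k → MvPowerSeries.coeff d f = 0 :=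
  Iff.rfl

lemma mul_mem_lowIdeal {n a b : ℕ} {f g : MvPowerSeries (Fin n) ℂ}
    (hf : f ∈ lowIdeal n a) (hg : g ∈ lowIdeal n b) : f * g ∈ lowIdeal n (a + b) := by
  intro d hd
  classical
  rw [MvPowerSeries.coeff_mul]
  apply Finset.sum_eq_zero
  rintro ⟨p, q⟩ hpq
  rw [Finset.HasAntidiagonal.mem_antidiagonal] at hpq
  have hdeg : p.degree + q.degree < a + b := by
    have := Finsupp.degree_add'' p q
    rw [hpq] at this
    omega
  rcases (by omega : p.degree < a ∨ q.degree < b) with h | h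
  · rw [hf p h, zero_mul]
  · rw [hg q h, mul_zero]

lemma mIdeal_le_lowIdeal (n : ℕ) : mIdeal n ≤ lowIdeal n 1 := by
  rw [mIdeal, Ideal.span_le]
  rintro _ ⟨j, rfl⟩ d hd
  classical
  rw [MvPowerSeries.coeff_X]
  have hd0 : d = 0 := by
    rwa [Nat.lt_one_iff, Finsupp.degree_eq_zero_iff] at hd
  rw [if_neg]
  intro h
  apply_fun (fun e => e j) at h
  simp [hd0] at h

lemma pow_mIdeal_le_lowIdeal (n : ℕ) : ∀ k, mIdeal n ^ k ≤ lowIdeal n k := by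
  intro k
  induction k with
  | zero => intro f _ d hd; exact absurd hd (Nat.not_lt_zero _)
  | succ k ih =>
    rw [pow_succ]
    apply Ideal.mul_le.mpr
    intro r hr s hs
    exact mul_mem_lowIdeal (ih hr) (mIdeal_le_lowIdeal n hs)

lemma eq_zero_of_mem_all_lowIdeal {n : ℕ} {f : MvPowerSeries (Fin n) ℂ}
    (h : ∀ k, f ∈ lowIdeal n (k + 1)) : f = 0 := by
  apply MvPowerSeries.ext
  intro d
  rw [map_zero]
  exact h d.degree d (Nat.lt_succ_self _)

lemma eq_zero_of_mem_all_pow {n : ℕ} {f : MvPowerSeries (Fin n) ℂ}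
    (h : ∀ k, f ∈ mIdeal n ^ (k + 1)) : f = 0 :=
  eq_zero_of_mem_all_lowIdeal fun k => pow_mIdeal_le_lowIdeal n (k + 1) (h k)

open scoped Classical in
/-- The part of `f` consisting of monomials whose least variable (with nonzero
exponent) is `x_j`. -/
def selPart {n : ℕ} (f : MvPowerSeries (Fin n) ℂ) (j : Fin n) : MvPowerSeries (Fin n) ℂ :=
  fun d => if d j ≠ 0 ∧ ∀ i, i < j → d i = 0 then MvPowerSeries.coeff d f else 0

lemma coeff_selPart {n : ℕ} (f : MvPowerSeries (Fin n) ℂ) (j : Fin n) (d : Fin n →₀ ℕ) :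
    MvPowerSeries.coeff d (selPart f j)
      = if d j ≠ 0 ∧ ∀ i, i < j → d i = 0 then MvPowerSeries.coeff d f else 0 := by
  rw [MvPowerSeries.coeff_apply, selPart]

lemma selPart_mem {n : ℕ} (f : MvPowerSeries (Fin n) ℂ) (j : Fin n) :
    selPart f j ∈ mIdeal n := by
  have hdvd : (MvPowerSeries.X j : MvPowerSeries (Fin n) ℂ) ∣ selPart f j := by
    rw [MvPowerSeries.X_dvd_iff]
    intro d hd
    rw [coeff_selPart, if_neg]
    rintro ⟨h1, -⟩
    exact h1 hd
  obtain ⟨g, hg⟩ := hdvd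
  rw [hg]
  exact Ideal.mul_mem_right _ _ (Ideal.subset_span ⟨j, rfl⟩)

lemma sum_selPart {n : ℕ} (f : MvPowerSeries (Fin n) ℂ)
    (hf : MvPowerSeries.constantCoeff f = 0) :
    ∑ j, selPart f j = f := by
  apply MvPowerSeries.ext
  intro d
  rw [map_sum]
  by_cases hd : d = 0
  · subst hd
    rw [Finset.sum_eq_zero, ← MvPowerSeries.coeff_zero_eq_constantCoeff] at *
    · exact hf.symm
    · intro j _
      rw [coeff_selPart, if_neg]
      rintro ⟨h1, -⟩
      simp at h1
  · have hne : d.support.Nonempty := Finsupp.support_nonempty_iff.mpr hd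
    set j0 := d.support.min' hne with hj0
    have hj0mem : j0 ∈ d.support := d.support.min'_mem hne
    have hj0ne : d j0 ≠ 0 := Finsupp.mem_support_iff.mp hj0mem
    rw [Finset.sum_eq_single_of_mem j0 (Finset.mem_univ _)]
    · rw [coeff_selPart, if_pos]
      refine ⟨hj0ne, fun i hi => ?_⟩
      by_contra hi0
      exact absurd (d.support.min'_le i (Finsupp.mem_support_iff.mpr hi0)) (not_le.mpr hi)
    · intro j _ hj
      rw [coeff_selPart, if_neg]
      rintro ⟨h1, h2⟩
      have hle : j0 ≤ j := d.support.min'_le j (Finsupp.mem_support_iff.mpr h1)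
      have hlt : j0 < j := lt_of_le_of_ne hle (Ne.symm hj)
      exact hj0ne (h2 j0 hlt)

lemma mem_mIdeal_of_constantCoeff {n : ℕ} {f : MvPowerSeries (Fin n) ℂ}
    (hf : MvPowerSeries.constantCoeff f = 0) : f ∈ mIdeal n := by
  rw [← sum_selPart f hf]
  exact Ideal.sum_mem _ fun j _ => selPart_mem f j

/-- Cartan's uniqueness theorem for semisimple automorphisms: let `φ` be a ℂ-algebra
automorphism of `P = ℂ[[x₁,…,xₙ]]` with `φ(m) = m` which is semisimple, i.e. there is a
formal coordinate system `u₁,…,uₙ ∈ m` generating `m` with `φ(uᵢ) = cᵢ·uᵢ`. If the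
degree-0 part of `φ` is the identity (`φ(xⱼ) − xⱼ ∈ m²` for all `j`), then `φ = id`. -/
theorem semisimple_automorphism_eq_id {n : ℕ} (hn : 0 < n)
    (φ : MvPowerSeries (Fin n) ℂ ≃ₐ[ℂ] MvPowerSeries (Fin n) ℂ)
    (hm : ∀ g, g ∈ mIdeal n ↔ φ g ∈ mIdeal n)
    (u : Fin n → MvPowerSeries (Fin n) ℂ) (hu : ∀ i, u i ∈ mIdeal n)
    (hugen : Ideal.span (Set.range u) = mIdeal n)
    (c : Fin n → ℂ) (hdiag : ∀ i, φ (u i) = c i • u i)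
    (h0 : ∀ j, φ (MvPowerSeries.X j) - MvPowerSeries.X j ∈ mIdeal n ^ 2) :
    φ = AlgEquiv.refl := by
  classical
  set m := mIdeal n with hmdef
  -- φ maps m^k into m^k
  have hφpow : ∀ k, ∀ a ∈ m ^ k, φ a ∈ m ^ k := by
    intro k
    induction k with
    | zero => intro a _; rw [pow_zero, Ideal.one_eq_top]; exact trivial
    | succ k ih =>
      intro a ha
      rw [pow_succ] at ha ⊢
      refine Submodule.mul_induction_on ha (fun x hx y hy => ?_) (fun x y hx hy => ?_)
      · rw [map_mul]
        exact Ideal.mul_mem_mul (ih x hx) ((hm y).mp hy)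
      · rw [map_add]; exact add_mem hx hy
  have hXmem : ∀ j, (MvPowerSeries.X j : MvPowerSeries (Fin n) ℂ) ∈ m :=
    fun j => Ideal.subset_span ⟨j, rfl⟩
  -- step 0 : φ f - f ∈ m for every f
  have S0 : ∀ f, φ f - f ∈ m := by
    intro f
    set a := MvPowerSeries.constantCoeff f with ha
    have hg : f - algebraMap ℂ (MvPowerSeries (Fin n) ℂ) a ∈ m := by
      apply mem_mIdeal_of_constantCoeff
      simp [MvPowerSeries.algebraMap_apply, ← ha]
    have hca : φ (algebraMap ℂ (MvPowerSeries (Fin n) ℂ) a)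
        = algebraMap ℂ (MvPowerSeries (Fin n) ℂ) a := φ.commutes a
    have : φ f - f = φ (f - algebraMap ℂ (MvPowerSeries (Fin n) ℂ) a)
        - (f - algebraMap ℂ (MvPowerSeries (Fin n) ℂ) a) := by
      rw [map_sub, hca]; ring
    rw [this]
    exact sub_mem ((hm _).mp hg) hg
  -- step 1 : φ f - f ∈ m ^ 2 for f ∈ m
  have S1 : ∀ f ∈ m, φ f - f ∈ m ^ 2 := by
    intro f hf
    rw [hmdef, mIdeal] at hf
    obtain ⟨a, hsum⟩ := (Submodule.mem_span_range_iff_exists_fun (MvPowerSeries (Fin n) ℂ)).mp hf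
    have key : φ f - f = ∑ j, (φ (a j) * (φ (MvPowerSeries.X j) - MvPowerSeries.X j)
        + (φ (a j) - a j) * MvPowerSeries.X j) := by
      rw [← hsum, map_sum, ← Finset.sum_sub_distrib]
      apply Finset.sum_congr rfl
      intro j _
      rw [smul_eq_mul, map_mul]
      ring
    rw [key]
    refine Ideal.sum_mem _ fun j _ => add_mem ?_ ?_
    · exact Ideal.mul_mem_left _ _ (h0 j)
    · rw [sq]
      exact Ideal.mul_mem_mul (S0 (a j)) (hXmem j)
  -- step k : φ f - f ∈ m ^ (k+2) for f ∈ m ^ (k+1)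
  have Sk : ∀ k, ∀ f ∈ m ^ (k + 1), φ f - f ∈ m ^ (k + 2) := by
    intro k
    induction k with
    | zero => intro f hf; rw [pow_one] at hf; exact S1 f hf
    | succ k ih =>
      intro f hf
      rw [pow_succ] at hf
      refine Submodule.mul_induction_on hf (fun x hx y hy => ?_) (fun x y hx hy => ?_)
      · have hxy : φ (x * y) - x * y
            = φ x * (φ y - y) + (φ x - x) * y := by rw [map_mul]; ring
        rw [hxy]
        refine add_mem ?_ ?_
        · have : m ^ (k + 3) = m ^ (k + 1) * m ^ 2 := by rw [← pow_add]
          rw [(by omega : k + 1 + 2 = k + 3), this]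
          exact Ideal.mul_mem_mul (hφpow (k + 1) x hx) (S1 y hy)
        · have : m ^ (k + 3) = m ^ (k + 2) * m ^ 1 := by rw [← pow_add]
          rw [(by omega : k + 1 + 2 = k + 3), this]
          exact Ideal.mul_mem_mul (ih x hx) (by rwa [pow_one])
      · have : φ (x + y) - (x + y) = (φ x - x) + (φ y - y) := by rw [map_add]; ring
        rw [this]
        exact add_mem hx hy
  -- the eigen-coordinates are fixed by φ
  have hufix : ∀ i, φ (u i) = u i := by
    intro i
    by_cases hci : c i = 1
    · rw [hdiag i, hci, one_smul]
    · have hzero : u i = 0 := by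
        apply eq_zero_of_mem_all_pow
        intro k
        induction k with
        | zero => rw [pow_one]; exact hu i
        | succ k ih =>
          have hD : φ (u i) - u i ∈ m ^ (k + 2) := Sk k _ ih
          have heq : φ (u i) - u i = (c i - 1) • u i := by
            rw [hdiag i, sub_smul, one_smul]
          rw [heq] at hD
          have : u i = (c i - 1)⁻¹ • ((c i - 1) • u i) := by
            rw [smul_smul, inv_mul_cancel₀ (sub_ne_zero.mpr hci), one_smul]
          rw [this, Algebra.smul_def]
          exact Ideal.mul_mem_left _ _ hD
      rw [hzero, map_zero]
  -- main induction : φ f - f ∈ m ^ (k+1) for every f and k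
  have Dk : ∀ k, ∀ f, φ f - f ∈ m ^ (k + 1) := by
    intro k
    induction k with
    | zero => intro f; rw [pow_one]; exact S0 f
    | succ k ih =>
      intro f
      set a := MvPowerSeries.constantCoeff f with ha
      set g := f - algebraMap ℂ (MvPowerSeries (Fin n) ℂ) a with hgdef
      have hg : g ∈ m := by
        apply mem_mIdeal_of_constantCoeff
        simp [hgdef, MvPowerSeries.algebraMap_apply, ← ha]
      have hDfg : φ f - f = φ g - g := by
        rw [hgdef, map_sub, φ.commutes a]; ring
      rw [hDfg]
      have hg' : g ∈ Ideal.span (Set.range u) := by rw [hugen]; exact hg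
      obtain ⟨b, hsum⟩ := (Submodule.mem_span_range_iff_exists_fun (MvPowerSeries (Fin n) ℂ)).mp hg'
      have key : φ g - g = ∑ i, (φ (b i) - b i) * u i := by
        rw [← hsum, map_sum, ← Finset.sum_sub_distrib]
        apply Finset.sum_congr rfl
        intro i _
        rw [smul_eq_mul, map_mul, hufix i]
        ring
      rw [key]
      refine Ideal.sum_mem _ fun i _ => ?_
      rw [pow_succ]
      exact Ideal.mul_mem_mul (ih (b i)) (hu i)
  -- conclude
  apply AlgEquiv.ext
  intro f
  have h1 : φ f - f = 0 := eq_zero_of_mem_all_pow fun k => Dk k f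
  have h2 := sub_eq_zero.mp h1
  simpa using h2
end
end
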